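/- Let p > 0, let T ∈ L_{p,∞} and let (T_n) ⊂ L_{p,∞} be a sequence such that (i) for every n, lim_{t→∞} t^{1/p} μ(t, T_n) = a_n exists, and (ii) dist_{L_{p,∞}}(T_n - T, (L_{p,∞})₀) → 0 as n → ∞. Then lim_{n→∞} a_n exists and lim_{t→∞} t^{1/p} μ(t, T) = lim_{n→∞} a_n. -/

import Mathlib

open MeasureTheory Filter Topology

variable {H : Type*} [NormedAddCommGroup H] [InnerProductSpace ℂ H] [CompleteSpace H]

/-- The `n`-th singular value (approximation number) of a bounded operator:
`μ(n,T) = inf{‖T - F‖ : rank F ≤ n}`. -/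
noncomputable def approxNum (T : H →L[ℂ] H) (n : ℕ) : ℝ :=
  sInf ((fun F : H →L[ℂ] H => ‖T - F‖) ''
    {F | Module.rank ℂ (LinearMap.range (F : H →ₗ[ℂ] H)) ≤ n})

/-- The singular value function `μ(t,T) = μ(⌊t⌋,T)` of a real variable `t`. -/
noncomputable def svf (T : H →L[ℂ] H) (t : ℝ) : ℝ :=
  approxNum T ⌊t⌋₊

/-- The weak Schatten quasi-norm `‖T‖_{p,∞} = sup_{t>0} t^{1/p} μ(t,T)`. -/
noncomputable def wkNorm (p : ℝ) (T : H →L[ℂ] H) : ℝ :=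
  sSup {x : ℝ | ∃ t : ℝ, 0 < t ∧ x = t ^ (1 / p) * svf T t}

/-- Membership in the weak Schatten ideal `L_{p,∞}`. -/
def MemWeakLp (p : ℝ) (T : H →L[ℂ] H) : Prop :=
  IsCompactOperator T ∧ BddAbove {x : ℝ | ∃ t : ℝ, 0 < t ∧ x = t ^ (1 / p) * svf T t}

/-- The separable part `(L_{p,∞})₀ = {V ∈ L_{p,∞} : t^{1/p} μ(t,V) → 0}`. -/
def sepPart (p : ℝ) : Set (H →L[ℂ] H) :=
  {V | MemWeakLp p V ∧ Tendsto (fun t : ℝ => t ^ (1 / p) * svf V t) atTop (𝓝 0)}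

/-- The distance of `T` to the separable part, in the `L_{p,∞}` quasi-norm. -/
noncomputable def distToSepPart (p : ℝ) (T : H →L[ℂ] H) : ℝ :=
  sInf ((fun V : H →L[ℂ] H => wkNorm p (T - V)) '' sepPart p)


set_option linter.unusedSectionVars false
set_option linter.unusedVariables false
set_option linter.unnecessarySimpa false


lemma zero_mem_rankSet (n : ℕ) :
    (0 : H →L[ℂ] H) ∈ {F : H →L[ℂ] H | Module.rank ℂ (LinearMap.range (F : H →ₗ[ℂ] H)) ≤ n} := by
  simp [Set.mem_setOf_eq, LinearMap.range_zero]

lemma approxNum_set_nonempty (A : H →L[ℂ] H) (n : ℕ) :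
    ((fun F : H →L[ℂ] H => ‖A - F‖) ''
      {F | Module.rank ℂ (LinearMap.range (F : H →ₗ[ℂ] H)) ≤ n}).Nonempty :=
  ⟨‖A‖, ⟨0, zero_mem_rankSet n, by simp⟩⟩

lemma approxNum_set_bddBelow (A : H →L[ℂ] H) (n : ℕ) :
    BddBelow ((fun F : H →L[ℂ] H => ‖A - F‖) ''
      {F | Module.rank ℂ (LinearMap.range (F : H →ₗ[ℂ] H)) ≤ n}) :=
  ⟨0, by rintro x ⟨F, -, rfl⟩; positivity⟩

lemma approxNum_nonneg (A : H →L[ℂ] H) (n : ℕ) : 0 ≤ approxNum A n :=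
  Real.sInf_nonneg (by rintro x ⟨F, -, rfl⟩; positivity)

lemma approxNum_le_of_rank (A F : H →L[ℂ] H) {n : ℕ}
    (h : Module.rank ℂ (LinearMap.range (F : H →ₗ[ℂ] H)) ≤ n) :
    approxNum A n ≤ ‖A - F‖ :=
  csInf_le (approxNum_set_bddBelow A n) ⟨F, h, rfl⟩

lemma approxNum_anti (A : H →L[ℂ] H) {m n : ℕ} (h : m ≤ n) :
    approxNum A n ≤ approxNum A m := by
  apply le_csInf (approxNum_set_nonempty A m)
  rintro x ⟨F, hF, rfl⟩
  exact approxNum_le_of_rank A F (hF.trans (by exact_mod_cast Nat.cast_le.2 h))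

lemma approxNum_add (A B : H →L[ℂ] H) (m n : ℕ) :
    approxNum (A + B) (m + n) ≤ approxNum A m + approxNum B n := by
  rw [← sub_le_iff_le_add]
  apply le_csInf (approxNum_set_nonempty A m)
  rintro x ⟨F, hF, rfl⟩
  rw [sub_le_iff_le_add, add_comm (‖A - F‖), ← sub_le_iff_le_add]
  apply le_csInf (approxNum_set_nonempty B n)
  rintro y ⟨G, hG, rfl⟩
  rw [sub_le_iff_le_add]
  have hrank : Module.rank ℂ (LinearMap.range ((F + G : H →L[ℂ] H) : H →ₗ[ℂ] H)) ≤ (m + n : ℕ) := by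
    have h1 : LinearMap.range ((F + G : H →L[ℂ] H) : H →ₗ[ℂ] H) ≤
        LinearMap.range (F : H →ₗ[ℂ] H) ⊔ LinearMap.range (G : H →ₗ[ℂ] H) := by
      rintro y ⟨x, rfl⟩
      exact Submodule.add_mem_sup (LinearMap.mem_range_self _ x) (LinearMap.mem_range_self _ x)
    calc Module.rank ℂ (LinearMap.range ((F + G : H →L[ℂ] H) : H →ₗ[ℂ] H))
        ≤ Module.rank ℂ ((LinearMap.range (F : H →ₗ[ℂ] H) ⊔ LinearMap.range (G : H →ₗ[ℂ] H) : Submodule ℂ H)) :=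
          Submodule.rank_mono h1
      _ ≤ _ + _ := Submodule.rank_add_le_rank_add_rank _ _
      _ ≤ (m : Cardinal) + (n : Cardinal) := add_le_add hF hG
      _ = ((m + n : ℕ) : Cardinal) := by exact_mod_cast (Nat.cast_add m n).symm
  calc approxNum (A + B) (m + n) ≤ ‖(A + B) - (F + G)‖ := approxNum_le_of_rank _ _ hrank
    _ ≤ ‖A - F‖ + ‖B - G‖ := by
        rw [show (A + B) - (F + G) = (A - F) + (B - G) by abel]
        exact norm_add_le _ _
    _ = ‖B - G‖ + ‖A - F‖ := add_comm _ _

lemma approxNum_neg (A : H →L[ℂ] H) (n : ℕ) : approxNum (-A) n = approxNum A n := by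
  unfold approxNum
  congr 1
  ext x
  constructor
  · rintro ⟨F, hF, rfl⟩
    refine ⟨-F, ?_, ?_⟩
    · simp only [Set.mem_setOf_eq]
      rw [ContinuousLinearMap.coe_neg, LinearMap.range_neg]
      exact hF
    · show ‖A - -F‖ = ‖-A - F‖
      rw [show A - -F = -(-A - F) by abel, norm_neg]
  · rintro ⟨F, hF, rfl⟩
    refine ⟨-F, ?_, ?_⟩
    · simp only [Set.mem_setOf_eq]
      rw [ContinuousLinearMap.coe_neg, LinearMap.range_neg]
      exact hF
    · show ‖-A - -F‖ = ‖A - F‖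
      rw [show -A - -F = -(A - F) by abel, norm_neg]

lemma approxNum_zero_op (n : ℕ) : approxNum (0 : H →L[ℂ] H) n = 0 := by
  refine le_antisymm ?_ (approxNum_nonneg _ _)
  simpa using approxNum_le_of_rank (0 : H →L[ℂ] H) 0 (by simpa using (zero_mem_rankSet n : _))


noncomputable def wgf (p : ℝ) (A : H →L[ℂ] H) (t : ℝ) : ℝ := t ^ (1 / p) * svf A t

lemma svf_nonneg (A : H →L[ℂ] H) (t : ℝ) : 0 ≤ svf A t := approxNum_nonneg _ _

lemma svf_neg (A : H →L[ℂ] H) (t : ℝ) : svf (-A) t = svf A t := approxNum_neg _ _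

lemma svf_zero_op (t : ℝ) : svf (0 : H →L[ℂ] H) t = 0 := approxNum_zero_op _

lemma wgf_nonneg (p : ℝ) (A : H →L[ℂ] H) {t : ℝ} (h : 0 ≤ t) : 0 ≤ wgf p A t :=
  mul_nonneg (Real.rpow_nonneg h _) (svf_nonneg _ _)

lemma wgf_neg (p : ℝ) (A : H →L[ℂ] H) (t : ℝ) : wgf p (-A) t = wgf p A t := by
  unfold wgf; rw [svf_neg]

lemma svf_add_le (A B : H →L[ℂ] H) {s u : ℝ} (hs : 0 ≤ s) (hu : 0 ≤ u) :
    svf (A + B) (s + u) ≤ svf A s + svf B u := by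
  unfold svf
  have hfloor : (⌊s⌋₊ + ⌊u⌋₊ : ℕ) ≤ ⌊s + u⌋₊ := by
    apply Nat.le_floor
    push_cast
    exact add_le_add (Nat.floor_le hs) (Nat.floor_le hu)
  exact (approxNum_anti _ hfloor).trans (approxNum_add A B _ _)

lemma wgf_split {p : ℝ} (hp : 0 < p) (A B : H →L[ℂ] H) {t ε : ℝ} (ht : 0 < t) (hε : 0 < ε) :
    wgf p (A + B) t ≤ (1 + ε) ^ (1 / p) * wgf p A (t / (1 + ε)) +
      ((1 + ε) / ε) ^ (1 / p) * wgf p B (ε * t / (1 + ε)) := by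
  have h1ε : (0:ℝ) < 1 + ε := by linarith
  set s := t / (1 + ε) with hs
  set u := ε * t / (1 + ε) with hu
  have hs0 : 0 < s := div_pos ht h1ε
  have hu0 : 0 < u := div_pos (mul_pos hε ht) h1ε
  have h1ε' : (1 + ε) ≠ 0 := ne_of_gt h1ε
  have hε' : ε ≠ 0 := ne_of_gt hε
  have hsu : s + u = t := by rw [hs, hu]; field_simp
  have hts : t ^ (1 / p) = (1 + ε) ^ (1 / p) * s ^ (1 / p) := by
    rw [← Real.mul_rpow (le_of_lt h1ε) (le_of_lt hs0)]
    congr 1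
    rw [hs]; field_simp
  have htu : t ^ (1 / p) = ((1 + ε) / ε) ^ (1 / p) * u ^ (1 / p) := by
    rw [← Real.mul_rpow (le_of_lt (div_pos h1ε hε)) (le_of_lt hu0)]
    congr 1
    rw [hu]; field_simp
  have key : svf (A + B) t ≤ svf A s + svf B u := by
    rw [← hsu]
    exact svf_add_le A B (le_of_lt hs0) (le_of_lt hu0)
  calc wgf p (A + B) t = t ^ (1 / p) * svf (A + B) t := rfl
    _ ≤ t ^ (1 / p) * (svf A s + svf B u) := by
        apply mul_le_mul_of_nonneg_left key (Real.rpow_nonneg (le_of_lt ht) _)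
    _ = (1 + ε) ^ (1 / p) * (s ^ (1 / p) * svf A s) +
        ((1 + ε) / ε) ^ (1 / p) * (u ^ (1 / p) * svf B u) := by
        rw [mul_add]; nth_rewrite 1 [hts]; rw [htu]; ring
    _ = _ := rfl


lemma wgf_set_eq (p : ℝ) (A : H →L[ℂ] H) :
    {x : ℝ | ∃ t : ℝ, 0 < t ∧ x = t ^ (1 / p) * svf A t} = {x : ℝ | ∃ t : ℝ, 0 < t ∧ x = wgf p A t} := rfl

/-- From a bound on the wgf-set, a uniform pointwise bound. -/
lemma exists_bound_of_bddAbove {p : ℝ} {A : H →L[ℂ] H}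
    (h : BddAbove {x : ℝ | ∃ t : ℝ, 0 < t ∧ x = t ^ (1 / p) * svf A t}) :
    ∃ M : ℝ, ∀ t : ℝ, 0 < t → wgf p A t ≤ M := by
  obtain ⟨M, hM⟩ := h
  exact ⟨M, fun t ht => hM ⟨t, ht, rfl⟩⟩

lemma wgfSet_bddAbove_add {p : ℝ} (hp : 0 < p) {A B : H →L[ℂ] H}
    (hA : BddAbove {x : ℝ | ∃ t : ℝ, 0 < t ∧ x = t ^ (1 / p) * svf A t})
    (hB : BddAbove {x : ℝ | ∃ t : ℝ, 0 < t ∧ x = t ^ (1 / p) * svf B t}) :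
    BddAbove {x : ℝ | ∃ t : ℝ, 0 < t ∧ x = t ^ (1 / p) * svf (A + B) t} := by
  obtain ⟨MA, hMA⟩ := exists_bound_of_bddAbove hA
  obtain ⟨MB, hMB⟩ := exists_bound_of_bddAbove hB
  refine ⟨(2:ℝ) ^ (1 / p) * MA + (2:ℝ) ^ (1 / p) * MB, ?_⟩
  rintro x ⟨t, ht, rfl⟩
  have h := wgf_split hp A B ht one_pos
  simp only [show (1:ℝ)+1 = 2 by norm_num, one_mul, div_one] at h
  have hA' : wgf p A (t / 2) ≤ MA := hMA _ (by linarith)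
  have hB' : wgf p B (t / 2) ≤ MB := hMB _ (by linarith)
  have h2 : (0:ℝ) ≤ (2:ℝ) ^ (1 / p) := Real.rpow_nonneg (by norm_num) _
  calc (t : ℝ) ^ (1 / p) * svf (A + B) t = wgf p (A + B) t := rfl
    _ ≤ (2:ℝ) ^ (1/p) * wgf p A (t / 2) + (2:ℝ) ^ (1/p) * wgf p B (t / 2) := h
    _ ≤ (2:ℝ) ^ (1/p) * MA + (2:ℝ) ^ (1/p) * MB := by
        exact add_le_add (mul_le_mul_of_nonneg_left hA' h2) (mul_le_mul_of_nonneg_left hB' h2)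

lemma wgfSet_bddAbove_neg {p : ℝ} {A : H →L[ℂ] H}
    (hA : BddAbove {x : ℝ | ∃ t : ℝ, 0 < t ∧ x = t ^ (1 / p) * svf A t}) :
    BddAbove {x : ℝ | ∃ t : ℝ, 0 < t ∧ x = t ^ (1 / p) * svf (-A) t} := by
  convert hA using 2 with x
  simp only [svf_neg]

lemma wgf_le_wkNorm {p : ℝ} {A : H →L[ℂ] H}
    (h : BddAbove {x : ℝ | ∃ t : ℝ, 0 < t ∧ x = t ^ (1 / p) * svf A t})
    {t : ℝ} (ht : 0 < t) : wgf p A t ≤ wkNorm p A :=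
  le_csSup h ⟨t, ht, rfl⟩

lemma zero_mem_sepPart (p : ℝ) : (0 : H →L[ℂ] H) ∈ sepPart p := by
  refine ⟨⟨isCompactOperator_zero, ⟨0, ?_⟩⟩, ?_⟩
  · rintro x ⟨t, ht, rfl⟩
    simp [svf_zero_op]
  · simp only [svf_zero_op, mul_zero]
    exact tendsto_const_nhds


lemma eps_facts (p ρ : ℝ) (hp : 0 < p) (hρ : 0 < ρ) (hρ1 : ρ ≤ 1) :
    ∃ ε : ℝ, 0 < ε ∧ 1 ≤ (1+ε)^((1:ℝ)/p) ∧ (1+ε)^((1:ℝ)/p) ≤ 2 ∧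
      (1+ε)^((1:ℝ)/p) * (1+ε)^((1:ℝ)/p) ≤ 1 + ρ ∧
      ((1+ε)^((1:ℝ)/p) * (1+ε)^((1:ℝ)/p)) * ((1+ε)^((1:ℝ)/p) * (1+ε)^((1:ℝ)/p)) = 1 + ρ := by
  have h0 : (0:ℝ) ≤ 1 + ρ := by linarith
  have h1 : (1:ℝ) < 1 + ρ := by linarith
  refine ⟨(1+ρ)^(p/4) - 1, ?_, ?_⟩
  · have : (1:ℝ) < (1+ρ)^(p/4) :=
      (Real.one_lt_rpow_iff_of_pos (by linarith)).2 (Or.inl ⟨h1, by positivity⟩)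
    linarith
  · have hq : (1 + ((1+ρ)^(p/4) - 1)) ^ ((1:ℝ)/p) = (1+ρ)^((1:ℝ)/4) := by
      rw [show 1 + ((1+ρ)^(p/4) - 1) = (1+ρ)^(p/4) by ring, ← Real.rpow_mul h0]
      congr 1
      field_simp
    rw [hq]
    set q : ℝ := (1+ρ)^((1:ℝ)/4) with hqdef
    have hq1 : 1 ≤ q := Real.one_le_rpow h1.le (by norm_num)
    have hqq : q * q = (1+ρ)^((1:ℝ)/2) := by
      rw [hqdef, ← Real.rpow_add (by linarith)]
      norm_num
    have hq4 : (q*q)*(q*q) = 1 + ρ := by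
      rw [hqq, ← Real.rpow_add (by linarith)]
      norm_num
    have hqq_le : q*q ≤ 1 + ρ := by nlinarith
    have hq2 : q ≤ 2 := by nlinarith
    exact ⟨hq1, hq2, hqq_le, hq4⟩

set_option maxHeartbeats 1000000

/-- **Birman–Solomyak limit lemma.** Let `p > 0`, `T ∈ L_{p,∞}`, and `(T_n) ⊂ L_{p,∞}`
with `lim_{t→∞} t^{1/p} μ(t,T_n) = a_n` for each `n` and
`dist_{L_{p,∞}}(T_n - T, (L_{p,∞})₀) → 0`.  Then `lim a_n` exists and
`lim_{t→∞} t^{1/p} μ(t,T) = lim_n a_n`. -/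
theorem stmt18 (p : ℝ) (hp : 0 < p) (T : H →L[ℂ] H) (hT : MemWeakLp p T)
    (Tn : ℕ → (H →L[ℂ] H)) (hTn : ∀ n, MemWeakLp p (Tn n)) (a : ℕ → ℝ)
    (hlim : ∀ n, Tendsto (fun t : ℝ => t ^ (1 / p) * svf (Tn n) t) atTop (𝓝 (a n)))
    (hdist : Tendsto (fun n => distToSepPart p (Tn n - T)) atTop (𝓝 0)) :
    ∃ L : ℝ, Tendsto a atTop (𝓝 L) ∧
      Tendsto (fun t : ℝ => t ^ (1 / p) * svf T t) atTop (𝓝 L) := by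
  have hlim' : ∀ n, Tendsto (wgf p (Tn n)) atTop (𝓝 (a n)) := hlim
  -- bddAbove of the wgf-set of `Tn n - T - V` for `V ∈ sepPart`
  have hbddTV : ∀ n, ∀ V ∈ sepPart p,
      BddAbove {x : ℝ | ∃ t : ℝ, 0 < t ∧ x = t ^ (1 / p) * svf (Tn n - T - V) t} := by
    intro n V hV
    have e : Tn n - T - V = (Tn n + -T) + -V := by abel
    rw [e]
    exact wgfSet_bddAbove_add hp
      (wgfSet_bddAbove_add hp (hTn n).2 (wgfSet_bddAbove_neg hT.2))
      (wgfSet_bddAbove_neg hV.1.2)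
  -- wkNorm of such differences is nonnegative, hence distToSepPart is nonnegative
  have hdistnonneg : ∀ n, 0 ≤ distToSepPart p (Tn n - T) := by
    intro n
    apply Real.sInf_nonneg
    rintro x ⟨Vv, hVv, rfl⟩
    have h1 : wgf p (Tn n - T - Vv) 1 ≤ wkNorm p (Tn n - T - Vv) :=
      wgf_le_wkNorm (hbddTV n Vv hVv) one_pos
    exact (wgf_nonneg p _ zero_le_one).trans h1
  -- choose almost-optimal V n in the separable part
  have choice : ∀ n : ℕ, ∃ Vc : H →L[ℂ] H, Vc ∈ sepPart p ∧
      wkNorm p (Tn n - T - Vc) < distToSepPart p (Tn n - T) + 1 / (n + 1) := by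
    intro n
    have hne : ((fun V : H →L[ℂ] H => wkNorm p (Tn n - T - V)) '' sepPart p).Nonempty :=
      ⟨_, ⟨0, zero_mem_sepPart p, rfl⟩⟩
    obtain ⟨x, ⟨Vc, hVc, rfl⟩, hx⟩ :=
      Real.lt_sInf_add_pos hne (show (0:ℝ) < 1 / (n + 1) by positivity)
    exact ⟨Vc, hVc, hx⟩
  choose V hVmem hVlt using choice
  set η : ℕ → ℝ := fun n => distToSepPart p (Tn n - T) + 1 / (n + 1) with hηdef
  have hηnonneg : ∀ n, 0 ≤ η n := fun n =>
    add_nonneg (hdistnonneg n) (by positivity)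
  have hηlim : Tendsto η atTop (𝓝 0) := by
    have h2 : Tendsto (fun n : ℕ => 1 / ((n : ℝ) + 1)) atTop (𝓝 0) :=
      tendsto_one_div_add_atTop_nhds_zero_nat
    have h3 := hdist.add h2
    rw [add_zero] at h3
    exact h3
  have hWbdd : ∀ n, BddAbove
      {x : ℝ | ∃ t : ℝ, 0 < t ∧ x = t ^ (1 / p) * svf (Tn n - T - V n) t} :=
    fun n => hbddTV n (V n) (hVmem n)
  have hWle : ∀ n, ∀ u : ℝ, 0 < u → wgf p (Tn n - T - V n) u ≤ η n := fun n u hu =>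
    (wgf_le_wkNorm (hWbdd n) hu).trans (le_of_lt (hVlt n))
  have hVlim : ∀ n, Tendsto (wgf p (V n)) atTop (𝓝 0) := fun n => (hVmem n).2
  -- uniform bound on wgf p T
  obtain ⟨M, hM⟩ := exists_bound_of_bddAbove hT.2
  have hM0 : 0 ≤ M := (wgf_nonneg p T zero_le_one).trans (hM 1 one_pos)
  -- the two key eventual estimates
  have claimU : ∀ ε : ℝ, 0 < ε → ∀ δ : ℝ, 0 < δ → ∀ n : ℕ, ∀ᶠ t : ℝ in atTop,
      wgf p T t ≤ (1+ε)^(1/p) * (1+ε)^(1/p) * a n + (1+ε)^(1/p) * (1+ε)^(1/p) * δ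
        + (1+ε)^(1/p) * ((1+ε)/ε)^(1/p) * δ + ((1+ε)/ε)^(1/p) * η n := by
    intro ε hε δ hδ n
    have h1ε : (0:ℝ) < 1 + ε := by linarith
    set c : ℝ := (1+ε)^(1/p) with hcdef
    set d : ℝ := ((1+ε)/ε)^(1/p) with hddef
    have hc0 : 0 ≤ c := Real.rpow_nonneg (le_of_lt h1ε) _
    have hd0 : 0 ≤ d := Real.rpow_nonneg (le_of_lt (div_pos h1ε hε)) _
    have ev1 : ∀ᶠ s : ℝ in atTop, wgf p (Tn n) s ≤ a n + δ :=
      (hlim' n).eventually (eventually_le_nhds (lt_add_of_pos_right _ hδ))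
    have ev2 : ∀ᶠ u : ℝ in atTop, wgf p (V n) u ≤ δ :=
      (hVlim n).eventually (eventually_le_nhds hδ)
    have m1 : Tendsto (fun t : ℝ => t / (1+ε) / (1+ε)) atTop atTop :=
      (tendsto_id.atTop_div_const h1ε).atTop_div_const h1ε
    have m2 : Tendsto (fun t : ℝ => ε * (t / (1+ε)) / (1+ε)) atTop atTop :=
      ((tendsto_id.atTop_div_const h1ε).const_mul_atTop hε).atTop_div_const h1ε
    filter_upwards [m1.eventually ev1, m2.eventually ev2, eventually_gt_atTop 0]
      with t h1 h2 ht
    have e : T = (Tn n + -(V n)) + -(Tn n - T - V n) := by abel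
    have step1 := wgf_split hp (Tn n + -(V n)) (-(Tn n - T - V n)) ht hε
    have step2 := wgf_split hp (Tn n) (-(V n)) (div_pos ht h1ε) hε
    have hW : wgf p (-(Tn n - T - V n)) (ε * t / (1+ε)) ≤ η n := by
      rw [wgf_neg]
      exact hWle n _ (div_pos (mul_pos hε ht) h1ε)
    have hV2 : wgf p (-(V n)) (ε * (t / (1+ε)) / (1+ε)) ≤ δ := by
      rw [wgf_neg]; exact h2
    calc wgf p T t = wgf p ((Tn n + -(V n)) + -(Tn n - T - V n)) t := by rw [← e]
      _ ≤ c * wgf p (Tn n + -(V n)) (t/(1+ε)) + d * wgf p (-(Tn n - T - V n)) (ε*t/(1+ε)) := step1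
      _ ≤ c * (c * wgf p (Tn n) (t/(1+ε)/(1+ε)) + d * wgf p (-(V n)) (ε*(t/(1+ε))/(1+ε)))
            + d * η n :=
          add_le_add (mul_le_mul_of_nonneg_left step2 hc0) (mul_le_mul_of_nonneg_left hW hd0)
      _ ≤ c * (c * (a n + δ) + d * δ) + d * η n := by
          apply add_le_add_left
          apply mul_le_mul_of_nonneg_left _ hc0
          exact add_le_add (mul_le_mul_of_nonneg_left h1 hc0) (mul_le_mul_of_nonneg_left hV2 hd0)
      _ = c * c * a n + c * c * δ + c * d * δ + d * η n := by ring
  have claimL : ∀ ε : ℝ, 0 < ε → ∀ δ : ℝ, 0 < δ → ∀ n : ℕ, ∀ᶠ t : ℝ in atTop,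
      a n ≤ (1+ε)^(1/p) * (1+ε)^(1/p) * wgf p T t + (1+ε)^(1/p) * ((1+ε)/ε)^(1/p) * δ
        + ((1+ε)/ε)^(1/p) * η n + δ := by
    intro ε hε δ hδ n
    have h1ε : (0:ℝ) < 1 + ε := by linarith
    have h1ε' : (1+ε) ≠ 0 := ne_of_gt h1ε
    set c : ℝ := (1+ε)^(1/p) with hcdef
    set d : ℝ := ((1+ε)/ε)^(1/p) with hddef
    have hc0 : 0 ≤ c := Real.rpow_nonneg (le_of_lt h1ε) _
    have hd0 : 0 ≤ d := Real.rpow_nonneg (le_of_lt (div_pos h1ε hε)) _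
    have ev1 : ∀ᶠ s : ℝ in atTop, a n - δ ≤ wgf p (Tn n) s :=
      (hlim' n).eventually (eventually_ge_nhds (sub_lt_self _ hδ))
    have ev2 : ∀ᶠ u : ℝ in atTop, wgf p (V n) u ≤ δ :=
      (hVlim n).eventually (eventually_le_nhds hδ)
    have m1 : Tendsto (fun t : ℝ => (1+ε) * ((1+ε) * t)) atTop atTop :=
      (tendsto_id.const_mul_atTop h1ε).const_mul_atTop h1ε
    have m2 : Tendsto (fun t : ℝ => ε * (((1+ε) * ((1+ε) * t)) / (1+ε)) / (1+ε)) atTop atTop := by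
      have : Tendsto (fun t : ℝ => (1+ε) * ((1+ε) * t)) atTop atTop := m1
      exact ((this.atTop_div_const h1ε).const_mul_atTop hε).atTop_div_const h1ε
    filter_upwards [m1.eventually ev1, m2.eventually ev2, eventually_gt_atTop 0]
      with t h1 h2 ht
    set t' : ℝ := (1+ε) * ((1+ε) * t) with ht'def
    have ht' : 0 < t' := by positivity
    have harg : t' / (1+ε) / (1+ε) = t := by
      rw [ht'def]; field_simp
    have e : Tn n = (T + V n) + (Tn n - T - V n) := by abel
    have step1 := wgf_split hp (T + V n) (Tn n - T - V n) ht' hε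
    have step2 := wgf_split hp T (V n) (div_pos ht' h1ε) hε
    have hW : wgf p (Tn n - T - V n) (ε * t' / (1+ε)) ≤ η n :=
      hWle n _ (div_pos (mul_pos hε ht') h1ε)
    have key : wgf p (Tn n) t' ≤ c * (c * wgf p T t + d * δ) + d * η n := by
      calc wgf p (Tn n) t' = wgf p ((T + V n) + (Tn n - T - V n)) t' := by rw [← e]
        _ ≤ c * wgf p (T + V n) (t'/(1+ε)) + d * wgf p (Tn n - T - V n) (ε*t'/(1+ε)) := step1
        _ ≤ c * (c * wgf p T (t'/(1+ε)/(1+ε)) + d * wgf p (V n) (ε*(t'/(1+ε))/(1+ε)))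
              + d * η n :=
            add_le_add (mul_le_mul_of_nonneg_left step2 hc0) (mul_le_mul_of_nonneg_left hW hd0)
        _ ≤ c * (c * wgf p T t + d * δ) + d * η n := by
            rw [harg]
            exact add_le_add_left (mul_le_mul_of_nonneg_left (add_le_add_right
              (mul_le_mul_of_nonneg_left h2 hd0) _) hc0) _
    have := h1.trans key
    linarith [this]
  -- uniform bound on η
  obtain ⟨Cη, hCη0⟩ := hηlim.bddAbove_range
  have hCη : ∀ n, η n ≤ Cη := fun n => hCη0 ⟨n, rfl⟩
  clear_value η
  -- `wgf p T` is Cauchy along atTop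
  have hFcauchy : CauchySeq (wgf p T) := by
    rw [Metric.cauchySeq_iff]
    intro ρ hρ
    have hM1 : (0:ℝ) < M + 1 := by linarith
    set ρ' : ℝ := min 1 (ρ/(4*(M+1))) with hρ'def
    have hρ'pos : 0 < ρ' := lt_min one_pos (by positivity)
    have hρ'le1 : ρ' ≤ 1 := min_le_left _ _
    have hρ'M : ρ' * M ≤ ρ/4 := by
      have h1 : ρ' ≤ ρ/(4*(M+1)) := min_le_right _ _
      have h3 : (ρ/(4*(M+1))) * (M+1) = ρ/4 := by field_simp
      nlinarith
    obtain ⟨ε, hε, hc1, hc2, hK2, hc4⟩ := eps_facts p ρ' hp hρ'pos hρ'le1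
    have h1ε : (0:ℝ) < 1 + ε := by linarith
    set c : ℝ := (1+ε)^((1:ℝ)/p) with hcdef
    set d : ℝ := ((1+ε)/ε)^((1:ℝ)/p) with hddef
    have hd0 : 0 ≤ d := Real.rpow_nonneg (div_pos h1ε hε).le _
    have hK0 : (0:ℝ) ≤ c*c := by nlinarith
    set δ : ℝ := ρ/(4*(6*d+4)) with hδdef
    have h6d : (0:ℝ) < 6*d+4 := by linarith
    have hδpos : 0 < δ := by positivity
    have hδeq : (6*d+4)*δ = ρ/4 := by
      rw [hδdef]; field_simp
    clear_value ρ' c d δ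
    have hη3 : Tendsto (fun n => 3*d*η n) atTop (𝓝 0) := by
      have h := hηlim.const_mul (3*d)
      rw [mul_zero] at h
      exact h
    obtain ⟨n, hn⟩ := (hη3.eventually
      (eventually_lt_nhds (show (0:ℝ) < ρ/4 by positivity))).exists
    obtain ⟨t1, ht1⟩ := eventually_atTop.1 (claimU ε hε δ hδpos n)
    obtain ⟨t2, ht2⟩ := eventually_atTop.1 (claimL ε hε δ hδpos n)
    refine ⟨max (max t1 t2) 1, ?_⟩
    have main : ∀ x y : ℝ, max (max t1 t2) 1 ≤ x → max (max t1 t2) 1 ≤ y →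
        wgf p T x - wgf p T y < ρ := by
      intro x y hx hy
      have hU := ht1 x (le_trans (le_trans (le_max_left t1 t2) (le_max_left _ 1)) hx)
      have hL' := ht2 y (le_trans (le_trans (le_max_right t1 t2) (le_max_left _ 1)) hy)
      rw [← hcdef, ← hddef] at hU hL'
      have hy1 : (1:ℝ) ≤ y := le_trans (le_max_right _ 1) hy
      have hyM : wgf p T y ≤ M := hM y (by linarith)
      have hy0 : 0 ≤ wgf p T y := wgf_nonneg p T (by linarith)
      have h5 : c*c*a n ≤ c*c*(c*c*wgf p T y + c*d*δ + d*η n + δ) :=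
        mul_le_mul_of_nonneg_left hL' hK0
      have h6 : c*c*(c*c*wgf p T y + c*d*δ + d*η n + δ)
          = ((c*c)*(c*c))*wgf p T y + (c*c)*(c*d*δ) + (c*c)*(d*η n) + (c*c)*δ := by ring
      have h7 : ((c*c)*(c*c))*wgf p T y = wgf p T y + ρ' * wgf p T y := by rw [hc4]; ring
      have h8 : ρ' * wgf p T y ≤ ρ' * M := mul_le_mul_of_nonneg_left hyM hρ'pos.le
      have hdδ : 0 ≤ d*δ := mul_nonneg hd0 hδpos.le
      have hdη : 0 ≤ d*η n := mul_nonneg hd0 (hηnonneg n)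
      have h9 : (c*c)*(c*d*δ) ≤ 4*(d*δ) := by nlinarith
      have h10 : c*d*δ ≤ 2*(d*δ) := by nlinarith
      have h11 : (c*c)*(d*η n) ≤ 2*(d*η n) := by nlinarith
      have h12 : (c*c)*δ ≤ 2*δ := by nlinarith
      have h13 : 6*(d*δ) + 4*δ = ρ/4 := by rw [← hδeq]; ring
      have hb1 : c*c*a n ≤ wgf p T y + ρ'*M + 4*(d*δ) + 2*(d*η n) + 2*δ := by
        linarith [h5, h6, h7, h8, h9, h11, h12]
      linarith only [hU, hb1, h10, h12, h13, hn, hdη, hρ'M, hρ]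
    intro s hs t ht
    rw [Real.dist_eq, abs_sub_lt_iff]
    exact ⟨main s t hs ht, main t s ht hs⟩
  obtain ⟨L, hLlim⟩ := cauchySeq_tendsto_of_complete hFcauchy
  have hLM : L ≤ M := le_of_tendsto hLlim (by
    filter_upwards [eventually_ge_atTop (1:ℝ)] with t ht
    exact hM t (by linarith))
  have hL0 : 0 ≤ L := ge_of_tendsto hLlim (by
    filter_upwards [eventually_ge_atTop (1:ℝ)] with t ht
    exact wgf_nonneg p T (by linarith))
  have ha0 : ∀ n, 0 ≤ a n := fun n => ge_of_tendsto (hlim' n) (by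
    filter_upwards [eventually_ge_atTop (1:ℝ)] with t ht
    exact wgf_nonneg p (Tn n) (by linarith))
  -- limit versions of the claims
  have limU : ∀ ε : ℝ, 0 < ε → ∀ δ : ℝ, 0 < δ → ∀ n : ℕ,
      L ≤ (1+ε)^(1/p) * (1+ε)^(1/p) * a n + (1+ε)^(1/p) * (1+ε)^(1/p) * δ
        + (1+ε)^(1/p) * ((1+ε)/ε)^(1/p) * δ + ((1+ε)/ε)^(1/p) * η n :=
    fun ε hε δ hδ n => le_of_tendsto hLlim (claimU ε hε δ hδ n)
  have limL : ∀ ε : ℝ, 0 < ε → ∀ δ : ℝ, 0 < δ → ∀ n : ℕ,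
      a n ≤ (1+ε)^(1/p) * (1+ε)^(1/p) * L + (1+ε)^(1/p) * ((1+ε)/ε)^(1/p) * δ
        + ((1+ε)/ε)^(1/p) * η n + δ := by
    intro ε hε δ hδ n
    have hG : Tendsto (fun t : ℝ => (1+ε)^(1/p) * (1+ε)^(1/p) * wgf p T t
        + (1+ε)^(1/p) * ((1+ε)/ε)^(1/p) * δ + ((1+ε)/ε)^(1/p) * η n + δ) atTop
        (𝓝 ((1+ε)^(1/p) * (1+ε)^(1/p) * L + (1+ε)^(1/p) * ((1+ε)/ε)^(1/p) * δ
          + ((1+ε)/ε)^(1/p) * η n + δ)) :=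
      (((hLlim.const_mul _).add tendsto_const_nhds).add tendsto_const_nhds).add
        tendsto_const_nhds
    exact ge_of_tendsto hG (claimL ε hε δ hδ n)
  -- a uniform bound on `a n`
  obtain ⟨ε1, hε1, hc11, hc12, hK12, hc14⟩ := eps_facts p 1 hp one_pos le_rfl
  have h1ε1 : (0:ℝ) < 1 + ε1 := by linarith
  set d1 : ℝ := ((1+ε1)/ε1)^((1:ℝ)/p) with hd1def
  have hd10 : 0 ≤ d1 := Real.rpow_nonneg (div_pos h1ε1 hε1).le _
  set Ab : ℝ := 2*M + 2*d1 + d1*Cη + 1 with hAbdef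
  have haAb : ∀ n, a n ≤ Ab := by
    intro n
    have h := limL ε1 hε1 1 one_pos n
    rw [← hd1def] at h
    have e1 : (1+ε1)^((1:ℝ)/p) * (1+ε1)^((1:ℝ)/p) * L ≤ 2*M := by nlinarith
    have e2 : (1+ε1)^((1:ℝ)/p) * d1 * 1 ≤ 2*d1 := by nlinarith
    have e3 : d1*η n ≤ d1*Cη := mul_le_mul_of_nonneg_left (hCη n) hd10
    linarith only [h, e1, e2, e3, hAbdef]
  have hAb0 : 0 ≤ Ab := le_trans (ha0 0) (haAb 0)
  clear_value d1 Ab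
  refine ⟨L, ?_, hLlim⟩
  rw [Metric.tendsto_atTop]
  intro ρ hρ
  have hMA1 : (0:ℝ) < M + Ab + 1 := by linarith
  set ρ' : ℝ := min 1 (ρ/(4*(M+Ab+1))) with hρ'def
  have hρ'pos : 0 < ρ' := lt_min one_pos (by positivity)
  have hρ'le1 : ρ' ≤ 1 := min_le_left _ _
  have hρ'MA : ρ' * (M + Ab) ≤ ρ/4 := by
    have h1 : ρ' ≤ ρ/(4*(M+Ab+1)) := min_le_right _ _
    have h3 : (ρ/(4*(M+Ab+1))) * (M+Ab+1) = ρ/4 := by field_simp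
    nlinarith
  have hρ'M : ρ' * M ≤ ρ/4 := by nlinarith [mul_nonneg hρ'pos.le hAb0]
  have hρ'Ab : ρ' * Ab ≤ ρ/4 := by nlinarith [mul_nonneg hρ'pos.le hM0]
  obtain ⟨ε, hε, hc1, hc2, hK2, hc4⟩ := eps_facts p ρ' hp hρ'pos hρ'le1
  have h1ε : (0:ℝ) < 1 + ε := by linarith
  set c : ℝ := (1+ε)^((1:ℝ)/p) with hcdef
  set d : ℝ := ((1+ε)/ε)^((1:ℝ)/p) with hddef
  have hd0 : 0 ≤ d := Real.rpow_nonneg (div_pos h1ε hε).le _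
  set δ : ℝ := ρ/(4*(6*d+4)) with hδdef
  have h6d : (0:ℝ) < 6*d+4 := by linarith
  have hδpos : 0 < δ := by positivity
  have hδeq : (6*d+4)*δ = ρ/4 := by
    rw [hδdef]; field_simp
  clear_value ρ' c d δ
  clear claimU claimL hFcauchy
  have hη3 : Tendsto (fun n => 3*d*η n) atTop (𝓝 0) := by
    have h := hηlim.const_mul (3*d)
    rw [mul_zero] at h
    exact h
  obtain ⟨N, hN⟩ := eventually_atTop.1 (hη3.eventually
    (eventually_lt_nhds (show (0:ℝ) < ρ/4 by positivity)))
  refine ⟨N, fun n hn => ?_⟩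
  have hU := limU ε hε δ hδpos n
  have hL2 := limL ε hε δ hδpos n
  rw [← hcdef, ← hddef] at hU hL2
  have hdδ : 0 ≤ d*δ := mul_nonneg hd0 hδpos.le
  have hdη : 0 ≤ d*η n := mul_nonneg hd0 (hηnonneg n)
  have h3dη : 3*d*η n < ρ/4 := hN n hn
  have hKle : c*c ≤ 2 := by linarith only [hK2, hρ'le1]
  have e2 : c*d*δ ≤ 2*(d*δ) := by
    calc c*d*δ = c*(d*δ) := by ring
      _ ≤ 2*(d*δ) := mul_le_mul_of_nonneg_right hc2 hdδ
  have e4 : c*c*δ ≤ 2*δ := mul_le_mul_of_nonneg_right hKle hδpos.le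
  rw [Real.dist_eq, abs_sub_lt_iff]
  constructor
  · -- a n - L < ρ
    have e0 : c*c*L ≤ (1+ρ')*L := mul_le_mul_of_nonneg_right hK2 hL0
    have e0' : ρ'*L ≤ ρ'*M := mul_le_mul_of_nonneg_left hLM hρ'pos.le
    have e1 : c*c*L ≤ L + ρ'*M := by linarith only [e0, e0']
    linarith only [hL2, e1, e2, h3dη, hδeq, hρ'M, hdδ, hdη, hρ, hδpos]
  · -- L - a n < ρ
    have e0 : c*c*a n ≤ (1+ρ')*a n := mul_le_mul_of_nonneg_right hK2 (ha0 n)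
    have e0' : ρ'*a n ≤ ρ'*Ab := mul_le_mul_of_nonneg_left (haAb n) hρ'pos.le
    have e1 : c*c*a n ≤ a n + ρ'*Ab := by linarith only [e0, e0']
    linarith only [hU, e1, e2, e4, h3dη, hδeq, hρ'Ab, hdδ, hdη, hρ, hδpos]
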